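/- Let n be a positive natural number, α > 0, λ ∈ ℝ, and set λ' = λ/α. Let s : Fin n → ℝ with s i > 0 for all i, and let M be the diagonal linear map on EuclideanSpace ℝ (Fin n) with (M θ) i = (θ i)/(s i). Let f : EuclideanSpace ℝ (Fin n) → ℝ be differentiable, and define the scale-adjusted regularized loss f_sreg(θ) = f(θ) + (λ'/(2α))·α·∑_i s i·(θ i)² — equivalently f_sreg(θ) = f(θ) + (λ'/2)·‖θ ⊙ √s‖². Then for every θ, the preconditioned gradient step on f_sreg without weight decay equals the preconditioned gradient step on f with decoupled weight decay λ: θ − α·M(∇f_sreg(θ)) = (1 − λ)·θ − α·M(∇f(θ)). -/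

import Mathlib

lemma quad_hasGradientAt (n : ℕ) (c : ℝ) (s : Fin n → ℝ) (θ : EuclideanSpace ℝ (Fin n)) :
    HasGradientAt (fun θ : EuclideanSpace ℝ (Fin n) => c * ∑ i, s i * (θ i) ^ 2)
      (WithLp.toLp 2 (fun i => 2 * c * s i * θ i : Fin n → ℝ) : EuclideanSpace ℝ (Fin n)) θ := by
  rw [hasGradientAt_iff_hasFDerivAt]
  simp only [pow_two]
  have h1 : HasFDerivAt (fun θ : EuclideanSpace ℝ (Fin n) => c * ∑ i, s i * (θ i * θ i))
      (∑ i, (c * (s i * (2 * θ i))) • (EuclideanSpace.proj i : EuclideanSpace ℝ (Fin n) →L[ℝ] ℝ)) θ := by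
    have h2 : HasFDerivAt (fun θ : EuclideanSpace ℝ (Fin n) => ∑ i, c * (s i * (θ i * θ i)))
        (∑ i, (c * (s i * (2 * θ i))) • (EuclideanSpace.proj i : EuclideanSpace ℝ (Fin n) →L[ℝ] ℝ)) θ := by
      apply HasFDerivAt.fun_sum
      intro i _
      have hp : HasFDerivAt (fun θ : EuclideanSpace ℝ (Fin n) => θ i)
          (EuclideanSpace.proj i : EuclideanSpace ℝ (Fin n) →L[ℝ] ℝ) θ :=
        (EuclideanSpace.proj i : EuclideanSpace ℝ (Fin n) →L[ℝ] ℝ).hasFDerivAt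
      have := (((hp.mul hp).const_mul (s i)).const_mul c)
      refine this.congr_fderiv ?_
      ext w
      simp [ContinuousLinearMap.smul_apply]
      ring
    convert h2 using 1
    ext w
    simp [Finset.mul_sum, mul_assoc]
  refine h1.congr_fderiv ?_
  ext w
  simp [InnerProductSpace.toDual_apply_apply, PiLp.inner_apply, RCLike.inner_apply]
  congr 1
  ext i
  ring

theorem preconditioned_step_sreg_eq_weight_decay_step
    (n : ℕ) (hn : 0 < n) (α lam : ℝ) (hα : 0 < α)
    (s : Fin n → ℝ) (hs : ∀ i, 0 < s i)
    (M : EuclideanSpace ℝ (Fin n) →ₗ[ℝ] EuclideanSpace ℝ (Fin n))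
    (hM : ∀ (θ : EuclideanSpace ℝ (Fin n)) (i : Fin n), M θ i = θ i / s i)
    (f : EuclideanSpace ℝ (Fin n) → ℝ) (hf : Differentiable ℝ f)
    (fsreg : EuclideanSpace ℝ (Fin n) → ℝ)
    (hfsreg : ∀ θ : EuclideanSpace ℝ (Fin n),
      fsreg θ = f θ + ((lam / α) / 2) * ∑ i, s i * (θ i) ^ 2)
    (θ : EuclideanSpace ℝ (Fin n)) :
    θ - α • M (gradient fsreg θ) = (1 - lam) • θ - α • M (gradient f θ) := by
  set v : EuclideanSpace ℝ (Fin n) :=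
    (WithLp.toLp 2 (fun i => 2 * ((lam / α) / 2) * s i * θ i : Fin n → ℝ) : EuclideanSpace ℝ (Fin n)) with hv
  have hq := quad_hasGradientAt n ((lam / α) / 2) s θ
  have hgrad : gradient fsreg θ = gradient f θ + v := by
    have hadd : HasGradientAt fsreg (gradient f θ + v) θ := by
      rw [hasGradientAt_iff_hasFDerivAt, map_add]
      have h1 := ((hf θ).hasGradientAt.hasFDerivAt).add (hq.hasFDerivAt)
      exact h1.congr_of_eventuallyEq (Filter.Eventually.of_forall fun x => (hfsreg x))
    exact hadd.gradient
  have key : ∀ i, (θ - α • M (gradient fsreg θ)) i = ((1 - lam) • θ - α • M (gradient f θ)) i := by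
    intro i
    have hsi := (hs i).ne'
    have hα' := hα.ne'
    simp only [hgrad, PiLp.sub_apply, PiLp.smul_apply, PiLp.add_apply, map_add, hM,
      smul_eq_mul]
    have hvi : v i = 2 * ((lam / α) / 2) * s i * θ i := rfl
    rw [hvi]
    field_simp
    ring
  exact PiLp.ext key
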